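/- Let n ≥ 2 and l₁, …, l_n be real numbers with 1 ≥ l₁ ≥ l₂ ≥ … ≥ l_n ≥ 0 and l₂ ≤ 1/2. Then there exists a closed spherical polygon in S³ with edge lengths π·l₁, …, π·l_n if and only if l₁ ≤ l₂ + … + l_n. -/

import Mathlib

open Finset

/-- Geodesic distance on the unit sphere of `ℝ⁴`. -/
noncomputable def sphereDist4 (x y : EuclideanSpace ℝ (Fin 4)) : ℝ :=
  Real.arccos (inner ℝ x y)

namespace SphAux



variable {F : Type*} [NormedAddCommGroup F] [InnerProductSpace ℝ F]

lemma le_of_cos_le {a b : ℝ} (ha' : a ≤ Real.pi) (hb : 0 ≤ b)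
    (h : Real.cos b ≤ Real.cos a) : a ≤ b := by
  by_contra hc
  push_neg at hc
  have := Real.cos_lt_cos_of_nonneg_of_le_pi hb ha' hc
  linarith

lemma inner_self_one {x : F} (hx : ‖x‖ = 1) : (inner ℝ x x : ℝ) = 1 := by
  rw [real_inner_self_eq_norm_sq, hx]; norm_num

lemma arccos_inner_triangle (x y z : F) (hx : ‖x‖ = 1) (hy : ‖y‖ = 1) (hz : ‖z‖ = 1) :
    Real.arccos (inner ℝ x z) ≤ Real.arccos (inner ℝ x y) + Real.arccos (inner ℝ y z) := by
  set α := Real.arccos (inner ℝ x y) with hα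
  set β := Real.arccos (inner ℝ y z) with hβ
  have hxy : |(inner ℝ x y : ℝ)| ≤ 1 := by simpa [hx, hy] using abs_real_inner_le_norm x y
  have hyz : |(inner ℝ y z : ℝ)| ≤ 1 := by simpa [hy, hz] using abs_real_inner_le_norm y z
  have hxz : |(inner ℝ x z : ℝ)| ≤ 1 := by simpa [hx, hz] using abs_real_inner_le_norm x z
  rcases le_or_gt Real.pi (α + β) with h | h
  · exact le_trans (Real.arccos_le_pi _) h
  · have hα0 : 0 ≤ α := Real.arccos_nonneg _
    have hβ0 : 0 ≤ β := Real.arccos_nonneg _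
    have hαπ : α ≤ Real.pi := Real.arccos_le_pi _
    have hβπ : β ≤ Real.pi := Real.arccos_le_pi _
    have hcα : Real.cos α = inner ℝ x y :=
      Real.cos_arccos (abs_le.1 hxy).1 (abs_le.1 hxy).2
    have hcβ : Real.cos β = inner ℝ y z :=
      Real.cos_arccos (abs_le.1 hyz).1 (abs_le.1 hyz).2
    set x' := x - Real.cos α • y with hx'
    set z' := z - Real.cos β • y with hz'
    have hsinα : 0 ≤ Real.sin α := Real.sin_nonneg_of_nonneg_of_le_pi hα0 hαπ
    have hsinβ : 0 ≤ Real.sin β := Real.sin_nonneg_of_nonneg_of_le_pi hβ0 hβπ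
    have hperp : ∀ (w y' : F) (c : ℝ), ‖w‖ = 1 → ‖y'‖ = 1 → (inner ℝ w y' : ℝ) = c →
        ‖w - c • y'‖ ^ 2 = 1 - c ^ 2 := by
      intro w y' c hw hy' hc
      rw [norm_sub_sq_real, real_inner_smul_right, norm_smul, hw, hy', hc]
      simp [Real.norm_eq_abs]
      nlinarith [sq_abs c]
    have hx'n : ‖x'‖ ^ 2 = Real.sin α ^ 2 := by
      rw [hx', hperp x y (Real.cos α) hx hy hcα.symm, Real.sin_sq]
    have hz'n : ‖z'‖ ^ 2 = Real.sin β ^ 2 := by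
      rw [hz', hperp z y (Real.cos β) hz hy ?_, Real.sin_sq]
      rw [real_inner_comm]; exact hcβ.symm
    have hx'le : ‖x'‖ ≤ Real.sin α := by nlinarith [norm_nonneg x']
    have hz'le : ‖z'‖ ≤ Real.sin β := by nlinarith [norm_nonneg z']
    have hinner : (inner ℝ x' z' : ℝ) = inner ℝ x z - Real.cos α * Real.cos β := by
      rw [hx', hz']
      simp [inner_sub_left, inner_sub_right, real_inner_smul_left, real_inner_smul_right,
        inner_self_one hy, hy, ← hcα, ← hcβ, real_inner_comm y x, real_inner_comm z y]
      try ring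
    have hCS : -(‖x'‖ * ‖z'‖) ≤ (inner ℝ x' z' : ℝ) :=
      neg_le_of_abs_le (abs_real_inner_le_norm x' z')
    have hkey : Real.cos (α + β) ≤ (inner ℝ x z : ℝ) := by
      rw [Real.cos_add]
      have h1 : ‖x'‖ * ‖z'‖ ≤ Real.sin α * Real.sin β :=
        mul_le_mul hx'le hz'le (norm_nonneg _) hsinα
      linarith [hinner]
    refine le_of_cos_le (Real.arccos_le_pi _) (by linarith) ?_
    rw [Real.cos_arccos (abs_le.1 hxz).1 (abs_le.1 hxz).2]
    exact hkey

lemma chain_dist_le (f : ℕ → F) (hf : ∀ t, ‖f t‖ = 1) (T : ℕ) :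
    Real.arccos (inner ℝ (f 0) (f T)) ≤
      ∑ t ∈ Finset.range T, Real.arccos (inner ℝ (f t) (f (t + 1))) := by
  induction T with
  | zero => simp [inner_self_one (hf 0), hf 0, Real.arccos_one]
  | succ T ih =>
    rw [Finset.sum_range_succ]
    have := arccos_inner_triangle (f 0) (f T) (f (T + 1)) (hf _) (hf _) (hf _)
    linarith



abbrev E4 := EuclideanSpace ℝ (Fin 4)

lemma exists_orth (u v : E4) : ∃ e : E4, ‖e‖ = 1 ∧ (inner ℝ u e : ℝ) = 0 ∧ (inner ℝ v e : ℝ) = 0 := by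
  classical
  set W : Submodule ℝ E4 := Submodule.span ℝ (Set.range ![u, v]) with hW
  have hrank : Module.finrank ℝ W ≤ 2 := by
    have := finrank_range_le_card (R := ℝ) ![u, v]
    simpa [Set.finrank] using this
  have hK : Wᗮ ≠ ⊥ := by
    intro hbot
    have h4 : Module.finrank ℝ E4 = 4 := by
      simp [finrank_euclideanSpace]
    have := Submodule.finrank_add_finrank_orthogonal (K := W)
    rw [hbot] at this
    simp [finrank_bot, h4] at this
    omega
  obtain ⟨e, heK, he0⟩ := Submodule.exists_mem_ne_zero_of_ne_bot hK
  have hnorm : ‖e‖ ≠ 0 := norm_ne_zero_iff.mpr he0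
  have hu : u ∈ W := Submodule.subset_span ⟨0, rfl⟩
  have hv : v ∈ W := Submodule.subset_span ⟨1, rfl⟩
  have hue : (inner ℝ u e : ℝ) = 0 := (Submodule.mem_orthogonal W e).1 heK u hu
  have hve : (inner ℝ v e : ℝ) = 0 := (Submodule.mem_orthogonal W e).1 heK v hv
  refine ⟨‖e‖⁻¹ • e, ?_, ?_, ?_⟩
  · rw [norm_smul]
    simp [abs_of_nonneg (norm_nonneg e), inv_mul_cancel₀ hnorm]
  · rw [real_inner_smul_right, hue]; ring
  · rw [real_inner_smul_right, hve]; ring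

set_option maxHeartbeats 1000000 in
lemma place (u v : E4) (hu : ‖u‖ = 1) (hv : ‖v‖ = 1) {a β γ : ℝ}
    (hab : (inner ℝ u v : ℝ) = Real.cos a) (hsa : 0 ≤ Real.sin a) (hsb : 0 ≤ Real.sin β)
    (h1 : Real.cos (a + β) ≤ Real.cos γ) (h2 : Real.cos γ ≤ Real.cos (a - β)) :
    ∃ w : E4, ‖w‖ = 1 ∧ (inner ℝ u w : ℝ) = Real.cos β ∧ (inner ℝ v w : ℝ) = Real.cos γ := by
  obtain ⟨e, he1, hue, hve⟩ := exists_orth u v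
  have huu : (inner ℝ u u : ℝ) = 1 := inner_self_one hu
  have hvv : (inner ℝ v v : ℝ) = 1 := inner_self_one hv
  have hee : (inner ℝ e e : ℝ) = 1 := inner_self_one he1
  have heu : (inner ℝ e u : ℝ) = 0 := by rw [real_inner_comm]; exact hue
  have hev : (inner ℝ e v : ℝ) = 0 := by rw [real_inner_comm]; exact hve
  have hvu : (inner ℝ v u : ℝ) = Real.cos a := by rw [real_inner_comm]; exact hab
  have norm_of_inner : ∀ w : E4, (inner ℝ w w : ℝ) = 1 → ‖w‖ = 1 := by
    intro w hw
    have := real_inner_self_eq_norm_sq w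
    nlinarith [norm_nonneg w]
  rcases eq_or_ne (Real.sin a) 0 with hs0 | hs0
  · -- degenerate case
    have hγ : Real.cos γ = Real.cos a * Real.cos β := by
      rw [Real.cos_add, hs0] at h1
      rw [Real.cos_sub, hs0] at h2
      simp at h1 h2
      linarith
    refine ⟨Real.cos β • u + Real.sin β • e, ?_, ?_, ?_⟩
    · apply norm_of_inner
      simp only [inner_add_left, inner_add_right, real_inner_smul_left, real_inner_smul_right,
        huu, hee, hue, heu]
      nlinarith [Real.sin_sq_add_cos_sq β]
    · simp only [inner_add_right, real_inner_smul_right, huu, hue]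
      ring
    · simp only [inner_add_right, real_inner_smul_right, hvu, hve, hγ]
      ring
  · have hsa' : 0 < Real.sin a := lt_of_le_of_ne hsa (Ne.symm hs0)
    set A := Real.cos a with hA
    set B := Real.cos β with hB
    set C := Real.cos γ with hC
    set u' : E4 := (Real.sin a)⁻¹ • (v - A • u) with hu'
    have huu' : (inner ℝ u u' : ℝ) = 0 := by
      rw [hu', real_inner_smul_right, inner_sub_right, real_inner_smul_right, hab, huu]
      ring
    have hvu' : (inner ℝ v u' : ℝ) = Real.sin a := by
      rw [hu', real_inner_smul_right, inner_sub_right, real_inner_smul_right, hvv, hvu]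
      have h1A : 1 - A * A = Real.sin a * Real.sin a := by
        nlinarith [Real.sin_sq_add_cos_sq a]
      rw [h1A]
      field_simp
    have hu'u' : (inner ℝ u' u' : ℝ) = 1 := by
      rw [hu']
      simp only [real_inner_smul_left, real_inner_smul_right, inner_sub_left, inner_sub_right,
        hvv, hvu, hab, huu]
      have h1A : 1 - A * A = Real.sin a * Real.sin a := by
        nlinarith [Real.sin_sq_add_cos_sq a]
      field_simp
      nlinarith [h1A]
    have hu'e : (inner ℝ u' e : ℝ) = 0 := by
      rw [hu', real_inner_smul_left, inner_sub_left, real_inner_smul_left, hue, hve]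
      ring
    have heu' : (inner ℝ e u' : ℝ) = 0 := by rw [real_inner_comm]; exact hu'e
    have hu'u : (inner ℝ u' u : ℝ) = 0 := by rw [real_inner_comm]; exact huu'
    set y : ℝ := (C - A * B) / Real.sin a with hy
    have hbound : |C - A * B| ≤ Real.sin a * Real.sin β := by
      rw [Real.cos_add] at h1
      rw [Real.cos_sub] at h2
      rw [abs_le]
      constructor <;> [linarith; linarith]
    have hy2 : y ^ 2 ≤ Real.sin β ^ 2 := by
      rw [hy, div_pow]
      rw [div_le_iff₀ (by positivity)]
      calc (C - A*B)^2 = |C - A*B|^2 := (sq_abs _).symm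
        _ ≤ (Real.sin a * Real.sin β)^2 := by
            apply pow_le_pow_left₀ (abs_nonneg _) hbound
        _ = Real.sin β ^2 * Real.sin a ^2 := by ring
    have hz0 : 0 ≤ 1 - B ^ 2 - y ^ 2 := by
      have hsq := Real.sin_sq β
      rw [← hB] at hsq
      linarith
    set z : ℝ := Real.sqrt (1 - B ^ 2 - y ^ 2) with hzdef
    have hz2 : z ^ 2 = 1 - B ^ 2 - y ^ 2 := Real.sq_sqrt hz0
    refine ⟨B • u + y • u' + z • e, ?_, ?_, ?_⟩
    · apply norm_of_inner
      simp only [inner_add_left, inner_add_right, real_inner_smul_left, real_inner_smul_right,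
        huu, hvv, hee, hue, heu, huu', hu'u, hu'e, heu', hu'u']
      linear_combination hz2
    · simp only [inner_add_right, real_inner_smul_right, huu, huu', hue]
      ring
    · simp only [inner_add_right, real_inner_smul_right, hvu, hvu', hve]
      rw [hy]
      field_simp
      ring
lemma chain_exists : ∀ (m : ℕ), 1 ≤ m → ∀ (b : Fin m → ℝ),
    (∀ j, 0 ≤ b j) → (∀ j, b j ≤ Real.pi / 2) →
    ∀ (a : ℝ), 0 ≤ a → a ≤ Real.pi → a ≤ ∑ j, b j → (∀ i, 2 * b i ≤ a + ∑ j, b j) →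
    ∀ u v : E4, ‖u‖ = 1 → ‖v‖ = 1 → (inner ℝ u v : ℝ) = Real.cos a →
    ∃ q : Fin (m + 1) → E4, (∀ k, ‖q k‖ = 1) ∧ q 0 = u ∧ q (Fin.last m) = v ∧
      ∀ j : Fin m, (inner ℝ (q j.castSucc) (q j.succ) : ℝ) = Real.cos (b j) := by
  intro m
  induction m with
  | zero => intro h; omega
  | succ m ih =>
    intro _ b hb0 hb2 a ha0 haπ haS hbi u v hu hv huv
    have hπ := Real.pi_pos
    rcases Nat.eq_zero_or_pos m with rfl | hm
    · -- base case : a single edge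
      have hsum1 : ∑ j : Fin 1, b j = b 0 := by simp
      have hab : a = b 0 := by
        have h1 := hbi 0
        rw [hsum1] at h1 haS
        linarith
      refine ⟨![u, v], ?_, rfl, rfl, ?_⟩
      · intro k
        fin_cases k
        · exact hu
        · exact hv
      · intro j
        fin_cases j
        simpa using huv.trans (by rw [hab])
    · -- inductive step
      set S' := ∑ j : Fin m, b j.castSucc with hS'
      set bm := b (Fin.last m) with hbmdef
      have hsum : ∑ j, b j = S' + bm := Fin.sum_univ_castSucc b
      have hne : (Finset.univ : Finset (Fin m)).Nonempty := ⟨⟨0, hm⟩, Finset.mem_univ _⟩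
      set M := Finset.univ.sup' hne (fun i : Fin m => 2 * b i.castSucc - S') with hM
      set a' := max |a - bm| M with ha'def
      have hbS : ∀ i : Fin m, b i.castSucc ≤ S' :=
        fun i => Finset.single_le_sum (fun j _ => hb0 _) (Finset.mem_univ i)
      have hS0 : 0 ≤ S' := Finset.sum_nonneg (fun j _ => hb0 _)
      have hbm0 : 0 ≤ bm := hb0 _
      have hbm2 : bm ≤ Real.pi / 2 := hb2 _
      have hMle : ∀ i : Fin m, 2 * b i.castSucc - S' ≤ a' := by
        intro i
        have h := Finset.le_sup' (f := fun i : Fin m => 2 * b i.castSucc - S')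
          (Finset.mem_univ i)
        exact le_trans h (le_max_right _ _)
      have ha'0 : 0 ≤ a' := le_trans (abs_nonneg _) (le_max_left _ _)
      have habm : a - bm ≤ S' := by rw [hsum] at haS; linarith
      have hbma : bm - a ≤ S' := by
        have := hbi (Fin.last m); rw [hsum, ← hbmdef] at this; linarith
      have ha'π : a' ≤ Real.pi := by
        apply max_le
        · rw [abs_le]; constructor <;> [linarith; linarith]
        · apply Finset.sup'_le
          intro i _
          have h1 := hbS i
          have h2 := hb2 i.castSucc
          linarith
      have ha'S : a' ≤ S' := by
        apply max_le
        · rw [abs_le]; constructor <;> [linarith; linarith]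
        · apply Finset.sup'_le
          intro i _
          have h1 := hbS i
          linarith
      have ha'ub1 : a' ≤ a + bm := by
        apply max_le
        · rw [abs_le]; constructor <;> [linarith; linarith]
        · apply Finset.sup'_le
          intro i _
          have h1 := hbi i.castSucc
          rw [hsum] at h1
          linarith
      have ha'ub2 : a' ≤ 2 * Real.pi - (a + bm) := by
        apply max_le
        · rw [abs_le]; constructor <;> [linarith; linarith]
        · apply Finset.sup'_le
          intro i _
          have h1 := hbS i
          have h2 := hb2 i.castSucc
          linarith
      have hcos1 : Real.cos (a + bm) ≤ Real.cos a' := by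
        rcases le_or_gt (a + bm) Real.pi with hle | hlt
        · exact Real.cos_le_cos_of_nonneg_of_le_pi ha'0 hle ha'ub1
        · rw [← Real.cos_two_pi_sub (a + bm)]
          exact Real.cos_le_cos_of_nonneg_of_le_pi ha'0 (by linarith) ha'ub2
      have hcos2 : Real.cos a' ≤ Real.cos (a - bm) := by
        rw [← Real.cos_abs (a - bm)]
        exact Real.cos_le_cos_of_nonneg_of_le_pi (abs_nonneg _) ha'π (le_max_left _ _)
      have hvu : (inner ℝ v u : ℝ) = Real.cos a := by rw [real_inner_comm]; exact huv
      have hsina : 0 ≤ Real.sin a := Real.sin_nonneg_of_nonneg_of_le_pi ha0 haπ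
      have hsinbm : 0 ≤ Real.sin bm :=
        Real.sin_nonneg_of_nonneg_of_le_pi hbm0 (by linarith)
      obtain ⟨w, hw1, hvw, huw⟩ := place v u hv hu hvu hsina hsinbm hcos1 hcos2
      have huw' : (inner ℝ u w : ℝ) = Real.cos a' := huw
      obtain ⟨q', hq'n, hq'0, hq'l, hq's⟩ :=
        ih hm (fun j => b j.castSucc) (fun j => hb0 _) (fun j => hb2 _) a' ha'0 ha'π
          (by rw [← hS'] at *; exact ha'S)
          (by intro i; have := hMle i; rw [← hS']; linarith)
          u w hu hw1 huw'
      refine ⟨Fin.snoc q' v, ?_, ?_, ?_, ?_⟩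
      · intro k
        refine Fin.lastCases ?_ ?_ k
        · rw [Fin.snoc_last]; exact hv
        · intro i; rw [Fin.snoc_castSucc]; exact hq'n i
      · rw [show (0 : Fin (m + 2)) = Fin.castSucc 0 from (Fin.castSucc_zero).symm,
          Fin.snoc_castSucc]
        exact hq'0
      · rw [Fin.snoc_last]
      · intro j
        refine Fin.lastCases ?_ ?_ j
        · rw [Fin.succ_last, Fin.snoc_last, Fin.snoc_castSucc, hq'l, real_inner_comm]
          exact hvw
        · intro i
          rw [Fin.succ_castSucc, Fin.snoc_castSucc, Fin.snoc_castSucc]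
          exact hq's i
end SphAux

open SphAux Fin.NatCast in
/-- For `n ≥ 2` and `1 ≥ l₁ ≥ … ≥ l_n ≥ 0` with `l₂ ≤ 1/2`, a closed spherical polygon in
`S³` with edge lengths `π·l₁, …, π·l_n` exists iff `l₁ ≤ l₂ + … + l_n`. -/
theorem spherical_polygon_exists_iff_of_reduced (n : ℕ) [NeZero n] (hn : 2 ≤ n)
    (l : Fin n → ℝ)
    (hl : ∀ i, l i ∈ Set.Icc (0 : ℝ) 1)
    (hmono : ∀ i j : Fin n, i ≤ j → l j ≤ l i)
    (hl2 : l ⟨1, by omega⟩ ≤ 1 / 2) :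
    (∃ p : Fin n → EuclideanSpace ℝ (Fin 4),
        (∀ k, ‖p k‖ = 1) ∧
        ∀ k : Fin n, sphereDist4 (p k) (p (k + 1)) = Real.pi * l k) ↔
      l ⟨0, by omega⟩ ≤ ∑ i ∈ univ.erase (⟨0, by omega⟩ : Fin n), l i := by
  have hπ := Real.pi_pos
  have h0 : (⟨0, by omega⟩ : Fin n) = 0 := by
    ext
    simp [Fin.val_zero]
  simp only [h0]
  constructor
  · rintro ⟨p, hpn, hpd⟩
    set f : ℕ → E4 := fun t => p ((1 + t : ℕ) : Fin n) with hf
    have key := chain_dist_le f (fun t => hpn _) (n - 1)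
    have hf0 : f 0 = p 1 := by simp [hf]
    have hfl : f (n - 1) = p 0 := by
      simp only [hf]
      congr 1
      rw [show (1 + (n - 1) : ℕ) = n from by omega, Fin.natCast_self]
    have hLHS : Real.arccos (inner ℝ (f 0) (f (n - 1))) = Real.pi * l 0 := by
      rw [hf0, hfl, real_inner_comm]
      have := hpd 0
      simpa [sphereDist4] using this
    have hterm : ∀ t, Real.arccos (inner ℝ (f t) (f (t + 1))) =
        Real.pi * l ((1 + t : ℕ) : Fin n) := by
      intro t
      have h1 : ((1 + (t + 1) : ℕ) : Fin n) = ((1 + t : ℕ) : Fin n) + 1 := by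
        push_cast
        open Fin.CommRing in ring
      have h2 := hpd ((1 + t : ℕ) : Fin n)
      simp only [sphereDist4] at h2
      simp only [hf, h1]
      exact h2
    rw [hLHS] at key
    have hsum : ∑ t ∈ Finset.range (n - 1), Real.arccos (inner ℝ (f t) (f (t + 1))) =
        Real.pi * ∑ i ∈ univ.erase (0 : Fin n), l i := by
      rw [Finset.mul_sum]
      refine Finset.sum_nbij' (fun t => ((1 + t : ℕ) : Fin n)) (fun i : Fin n => i.val - 1)
        ?_ ?_ ?_ ?_ ?_
      · intro t ht
        simp only [Finset.mem_range] at ht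
        have hv : ((1 + t : ℕ) : Fin n).val = 1 + t := Fin.val_cast_of_lt (by omega)
        simp only [Finset.mem_erase, Finset.mem_univ, and_true]
        intro hc
        rw [Fin.ext_iff, hv] at hc
        simp at hc
      · intro i hi
        simp only [Finset.mem_erase, Finset.mem_univ, and_true] at hi
        have h1 : i.val ≠ 0 := by
          intro hc
          exact hi (Fin.ext (by simpa using hc))
        have h2 := i.isLt
        simp only [Finset.mem_range]
        omega
      · intro t ht
        simp only [Finset.mem_range] at ht
        show (((1 + t : ℕ) : Fin n)).val - 1 = t
        rw [Fin.val_cast_of_lt (by omega)]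
        omega
      · intro i hi
        simp only [Finset.mem_erase, Finset.mem_univ, and_true] at hi
        have h1 : i.val ≠ 0 := by
          intro hc
          exact hi (Fin.ext (by simpa using hc))
        show ((1 + (i.val - 1) : ℕ) : Fin n) = i
        rw [show (1 + (i.val - 1) : ℕ) = i.val from by omega, Fin.cast_val_eq_self]
      · intro t ht
        exact hterm t
    rw [hsum] at key
    exact (mul_le_mul_iff_right₀ hπ).1 key
  · intro h
    obtain ⟨N, rfl⟩ : ∃ N, n = N + 1 := ⟨n - 1, by omega⟩
    have hN : 1 ≤ N := by omega
    have hl0 := hl 0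
    set a := Real.pi * l 0 with ha
    have hl1 : ∀ j : Fin N, l j.succ ≤ 1 / 2 := by
      intro j
      refine le_trans (hmono ⟨1, by omega⟩ j.succ ?_) hl2
      simp only [Fin.le_def, Fin.val_succ]
      omega
    set b : Fin N → ℝ := fun j => Real.pi * l j.succ with hb
    have hb0 : ∀ j, 0 ≤ b j := fun j => mul_nonneg hπ.le (hl _).1
    have hb2 : ∀ j, b j ≤ Real.pi / 2 := by
      intro j
      have h1 := hl1 j
      have : b j = Real.pi * l j.succ := rfl
      rw [this]
      nlinarith
    have hsucc_sum : ∑ i ∈ univ.erase (0 : Fin (N + 1)), l i = ∑ j : Fin N, l j.succ := by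
      have h1 := Fin.sum_univ_succ l
      have h2 := Finset.sum_erase_add univ l (Finset.mem_univ (0 : Fin (N + 1)))
      linarith
    have hsumb : ∑ j, b j = Real.pi * ∑ i ∈ univ.erase (0 : Fin (N + 1)), l i := by
      rw [hsucc_sum, Finset.mul_sum]
    have ha0 : 0 ≤ a := mul_nonneg hπ.le hl0.1
    have haπ : a ≤ Real.pi := by
      rw [ha]
      nlinarith [hl0.2]
    have haS : a ≤ ∑ j, b j := by
      rw [hsumb, ha]
      nlinarith [h]
    have hbi : ∀ i, 2 * b i ≤ a + ∑ j, b j := by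
      intro i
      have h1 : l i.succ ≤ l 0 := hmono 0 i.succ (Fin.zero_le _)
      have h2 : b i ≤ ∑ j, b j := Finset.single_le_sum (fun j _ => hb0 j) (Finset.mem_univ i)
      have h3 : b i ≤ a := by
        have : b i = Real.pi * l i.succ := rfl
        rw [this, ha]
        nlinarith
      linarith
    set u : E4 := EuclideanSpace.single (0 : Fin 4) (1 : ℝ) with hudef
    set v : E4 := Real.cos a • EuclideanSpace.single (0 : Fin 4) (1 : ℝ)
      + Real.sin a • EuclideanSpace.single (1 : Fin 4) (1 : ℝ) with hvdef
    have hsingle : ∀ i j : Fin 4,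
        (inner ℝ (EuclideanSpace.single i (1 : ℝ)) (EuclideanSpace.single j (1 : ℝ)) : ℝ) =
          if i = j then 1 else 0 := by
      intro i j
      rw [EuclideanSpace.inner_single_left]
      by_cases hij : i = j <;> simp [hij, EuclideanSpace.single_apply]
    have hu : ‖u‖ = 1 := by
      rw [hudef, EuclideanSpace.norm_single]
      norm_num
    have huv : (inner ℝ u v : ℝ) = Real.cos a := by
      rw [hudef, hvdef]
      simp only [inner_add_right, real_inner_smul_right, hsingle]
      norm_num
    have hv : ‖v‖ = 1 := by
      have h1 : (inner ℝ v v : ℝ) = 1 := by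
        rw [hvdef]
        simp only [inner_add_left, inner_add_right, real_inner_smul_left,
          real_inner_smul_right, hsingle]
        norm_num
        nlinarith [Real.sin_sq_add_cos_sq a]
      have h2 := real_inner_self_eq_norm_sq v
      nlinarith [norm_nonneg v]
    have hvu : (inner ℝ v u : ℝ) = Real.cos a := by rw [real_inner_comm]; exact huv
    obtain ⟨q, hqn, hq0, hql, hqs⟩ :=
      chain_exists N hN b hb0 hb2 a ha0 haπ haS hbi v u hv hu hvu
    have hzs : (0 : Fin (N + 1)) - 1 = Fin.last N := by
      rw [← Fin.last_add_one N, add_sub_cancel_right]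
    have hss : ∀ j : Fin N, j.succ - 1 = j.castSucc := by
      intro j
      rw [← Fin.coeSucc_eq_succ, add_sub_cancel_right]
    refine ⟨fun k => q (k - 1), fun k => hqn _, ?_⟩
    intro k
    refine Fin.cases ?_ ?_ k
    · show sphereDist4 (q (0 - 1)) (q (0 + 1 - 1)) = Real.pi * l 0
      rw [hzs, zero_add, sub_self, hql, hq0]
      simp only [sphereDist4]
      rw [huv, Real.arccos_cos ha0 haπ]
    · intro j
      show sphereDist4 (q (j.succ - 1)) (q (j.succ + 1 - 1)) = Real.pi * l j.succ
      rw [hss j, add_sub_cancel_right]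
      simp only [sphereDist4]
      rw [hqs j, Real.arccos_cos (hb0 j) (by linarith [hb2 j])]
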